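/- Let integers k ≥ 2, t ≥ 2, Δ ≥ 64 + 12·ln(kt), and let D ≥ 4 be an integer with D < kΔ/(16 ln D). Then there exists a graph H on vertex set I_1 ⊔ … ⊔ I_t with |I_i| = D for all i, each I_i independent, with maximum degree at most Δ, such that H contains no k-independent transversal: there is no independent set S ⊆ V(H) with |S ∩ I_i| = k for all i. -/

import Mathlib

open Finset



private lemma aux_sum_pow {α : Type*} [DecidableEq α] (s : Finset α) (p q : ℝ) :
    ∑ E ∈ s.powerset, p ^ E.card * q ^ (s.card - E.card) = (p + q) ^ s.card := by
  rw [← Finset.prod_const, Finset.prod_add]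
  refine Finset.sum_congr rfl fun E hE => ?_
  rw [Finset.prod_const, Finset.prod_const, Finset.card_sdiff_of_subset (Finset.mem_powerset.1 hE)]

private lemma aux_mgf {α : Type*} [DecidableEq α] (s I : Finset α) (hI : I ⊆ s) (p q : ℝ) :
    ∑ E ∈ s.powerset, (2:ℝ) ^ (E ∩ I).card * (p ^ E.card * q ^ (s.card - E.card))
      = (2*p + q) ^ I.card * (p + q) ^ (s.card - I.card) := by
  have key : ∀ E ∈ s.powerset,
      (2:ℝ) ^ (E ∩ I).card * (p ^ E.card * q ^ (s.card - E.card))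
      = (∏ e ∈ E, (if e ∈ I then 2*p else p)) * ∏ e ∈ s \ E, q := by
    intro E hE
    rw [Finset.prod_ite, Finset.prod_const, Finset.prod_const, Finset.prod_const,
      Finset.card_sdiff_of_subset (Finset.mem_powerset.1 hE)]
    have h1 : E.filter (· ∈ I) = E ∩ I := by
      ext x; simp [Finset.mem_inter, Finset.mem_filter]
    have h2 : (E.filter (· ∈ I)).card + (E.filter (¬ · ∈ I)).card = E.card :=
      Finset.card_filter_add_card_filter_not _
    rw [h1] at h2
    have h4 : (E ∩ I).card ≤ E.card := Finset.card_le_card (Finset.inter_subset_left)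
    have h3 : (E.filter (¬ · ∈ I)).card = E.card - (E ∩ I).card := by omega
    rw [h1, h3, mul_pow]
    have h5 : p ^ (E ∩ I).card * p ^ (E.card - (E ∩ I).card) = p ^ E.card := by
      rw [← pow_add, Nat.add_sub_cancel' h4]
    calc (2:ℝ) ^ (E ∩ I).card * (p ^ E.card * q ^ (s.card - E.card))
        = (2:ℝ) ^ (E ∩ I).card * ((p ^ (E ∩ I).card * p ^ (E.card - (E ∩ I).card))
            * q ^ (s.card - E.card)) := by rw [h5]
      _ = 2 ^ (E ∩ I).card * p ^ (E ∩ I).card * p ^ (E.card - (E ∩ I).card)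
            * q ^ (s.card - E.card) := by ring
  rw [Finset.sum_congr rfl key, ← Finset.prod_add]
  have hcongr : ∀ e ∈ s, ((if e ∈ I then 2*p else p) + q) = (if e ∈ I then 2*p+q else p+q) := by
    intro e _; split <;> ring
  rw [Finset.prod_congr rfl hcongr, Finset.prod_ite, Finset.prod_const, Finset.prod_const]
  have h1 : s.filter (· ∈ I) = I := by
    ext x; simp only [Finset.mem_filter]
    exact ⟨fun h => h.2, fun h => ⟨hI h, h⟩⟩
  have h2 : (s.filter (· ∈ I)).card + (s.filter (¬ · ∈ I)).card = s.card :=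
    Finset.card_filter_add_card_filter_not _
  rw [h1] at h2 ⊢
  have h3 : (s.filter (¬ · ∈ I)).card = s.card - I.card := by omega
  rw [h3]

private lemma aux_ind {α : Type*} [DecidableEq α] (s P : Finset α) (hP : P ⊆ s) (p q : ℝ)
    (hpq : p + q = 1) :
    ∑ E ∈ (s \ P).powerset, p ^ E.card * q ^ (s.card - E.card) = q ^ P.card := by
  have hPs : P.card ≤ s.card := Finset.card_le_card hP
  have hc : (s \ P).card = s.card - P.card := Finset.card_sdiff_of_subset hP
  have key : ∀ E ∈ (s \ P).powerset,
      p ^ E.card * q ^ (s.card - E.card)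
      = q ^ P.card * (p ^ E.card * q ^ ((s \ P).card - E.card)) := by
    intro E hE
    have hE' : E.card ≤ (s \ P).card := Finset.card_le_card (Finset.mem_powerset.1 hE)
    have h : s.card - E.card = P.card + ((s \ P).card - E.card) := by omega
    rw [h, pow_add]; ring
  rw [Finset.sum_congr rfl key, ← Finset.mul_sum, aux_sum_pow, hpq, one_pow, mul_one]

private lemma aux_union_le {β : Type*} [DecidableEq β] (A B : Finset β) (f : β → ℝ)
    (hf : ∀ b, 0 ≤ f b) : ∑ b ∈ A ∪ B, f b ≤ ∑ b ∈ A, f b + ∑ b ∈ B, f b := by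
  rw [← Finset.union_sdiff_self_eq_union, Finset.sum_union Finset.disjoint_sdiff]
  exact add_le_add le_rfl (Finset.sum_le_sum_of_subset_of_nonneg (Finset.sdiff_subset)
    (fun b _ _ => hf b))

private lemma aux_biUnion_le {α β : Type*} [DecidableEq α] [DecidableEq β] (s : Finset α)
    (t : α → Finset β) (f : β → ℝ) (hf : ∀ b, 0 ≤ f b) :
    ∑ b ∈ s.biUnion t, f b ≤ ∑ a ∈ s, ∑ b ∈ t a, f b := by
  induction s using Finset.cons_induction with
  | empty => simp
  | cons a s ha ih =>
    rw [Finset.cons_eq_insert, Finset.biUnion_insert, Finset.sum_insert ha]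
    exact le_trans (aux_union_le _ _ _ hf) (add_le_add le_rfl ih)

private lemma aux_log12 {x : ℝ} (hx : 64 ≤ x) : Real.log x ≤ x / 12 := by
  have hxpos : (0:ℝ) < x := by linarith
  have h1 : Real.log x = Real.log 64 + Real.log (x / 64) := by
    rw [← Real.log_mul (by norm_num) (by positivity)]
    congr 1; field_simp
  have h2 : Real.log (x / 64) ≤ x / 64 - 1 := Real.log_le_sub_one_of_pos (by positivity)
  have h3 : Real.log 64 = 6 * Real.log 2 := by
    rw [show (64:ℝ) = 2 ^ 6 by norm_num, Real.log_pow]; push_cast; ring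
  have h4 : Real.log 2 < 0.6931471808 := Real.log_two_lt_d9
  nlinarith

private lemma aux_deg {α : Type*} [DecidableEq α] (C I : Finset α) (hI : I ⊆ C) (p q : ℝ)
    (hp0 : 0 ≤ p) (hq0 : 0 ≤ q) (hpq : p + q = 1) (Δ : ℕ) :
    ∑ E ∈ C.powerset.filter (fun E => Δ + 1 ≤ (E ∩ I).card),
        p ^ E.card * q ^ (C.card - E.card)
      ≤ (1+p) ^ I.card / 2 ^ (Δ+1) := by
  have hstep : ∀ E ∈ C.powerset.filter (fun E => Δ + 1 ≤ (E ∩ I).card),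
      p ^ E.card * q ^ (C.card - E.card)
        ≤ (2:ℝ) ^ (E ∩ I).card * (p ^ E.card * q ^ (C.card - E.card)) / 2 ^ (Δ+1) := by
    intro E hE
    have hcard := (Finset.mem_filter.1 hE).2
    have h2 : (2:ℝ) ^ (Δ+1) ≤ 2 ^ (E ∩ I).card :=
      pow_le_pow_right₀ (by norm_num) hcard
    rw [le_div_iff₀ (by positivity)]
    have h3 : (0:ℝ) ≤ p ^ E.card * q ^ (C.card - E.card) :=
      mul_nonneg (pow_nonneg hp0 _) (pow_nonneg hq0 _)
    nlinarith
  calc ∑ E ∈ C.powerset.filter (fun E => Δ + 1 ≤ (E ∩ I).card),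
        p ^ E.card * q ^ (C.card - E.card)
      ≤ ∑ E ∈ C.powerset.filter (fun E => Δ + 1 ≤ (E ∩ I).card),
          (2:ℝ) ^ (E ∩ I).card * (p ^ E.card * q ^ (C.card - E.card)) / 2 ^ (Δ+1) :=
        Finset.sum_le_sum hstep
    _ ≤ ∑ E ∈ C.powerset,
          (2:ℝ) ^ (E ∩ I).card * (p ^ E.card * q ^ (C.card - E.card)) / 2 ^ (Δ+1) :=
        Finset.sum_le_sum_of_subset_of_nonneg (Finset.filter_subset _ _)
          (fun E _ _ => div_nonneg (mul_nonneg (by positivity)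
            (mul_nonneg (pow_nonneg hp0 _) (pow_nonneg hq0 _))) (by positivity))
    _ = (∑ E ∈ C.powerset,
          (2:ℝ) ^ (E ∩ I).card * (p ^ E.card * q ^ (C.card - E.card))) / 2 ^ (Δ+1) := by
        rw [← Finset.sum_div]
    _ = ((2*p + q) ^ I.card * (p + q) ^ (C.card - I.card)) / 2 ^ (Δ+1) := by
        rw [aux_mgf C I hI p q]
    _ = (1+p) ^ I.card / 2 ^ (Δ+1) := by
        rw [hpq, one_pow, mul_one, show 2*p+q = 1+p by linarith]

private def crossPairs (t D : ℕ) : Finset ((Fin t × Fin D) × (Fin t × Fin D)) :=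
  univ.filter (fun e => e.1.1 < e.2.1)

private def incPairs {t D : ℕ} (v : Fin t × Fin D) :
    Finset ((Fin t × Fin D) × (Fin t × Fin D)) :=
  (crossPairs t D).filter (fun e => e.1 = v ∨ e.2 = v)

private def pairsIn {t D : ℕ} (S : Finset (Fin t × Fin D)) :
    Finset ((Fin t × Fin D) × (Fin t × Fin D)) :=
  S.biUnion (fun u => (S.filter (fun v => u.1 < v.1)).image (fun v => (u, v)))

private lemma mem_crossPairs {t D : ℕ} (e : (Fin t × Fin D) × (Fin t × Fin D)) :
    e ∈ crossPairs t D ↔ e.1.1 < e.2.1 := by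
  simp [crossPairs]

private lemma mem_incPairs {t D : ℕ} (v : Fin t × Fin D)
    (e : (Fin t × Fin D) × (Fin t × Fin D)) :
    e ∈ incPairs v ↔ e ∈ crossPairs t D ∧ (e.1 = v ∨ e.2 = v) := by
  simp [incPairs]

private lemma incPairs_subset {t D : ℕ} (v : Fin t × Fin D) :
    incPairs v ⊆ crossPairs t D := Finset.filter_subset _ _

private lemma mem_pairsIn {t D : ℕ} (S : Finset (Fin t × Fin D))
    (e : (Fin t × Fin D) × (Fin t × Fin D)) :
    e ∈ pairsIn S ↔ e.1 ∈ S ∧ e.2 ∈ S ∧ e.1.1 < e.2.1 := by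
  simp only [pairsIn, Finset.mem_biUnion, Finset.mem_image, Finset.mem_filter]
  constructor
  · rintro ⟨u, hu, v, ⟨hv, hlt⟩, rfl⟩; exact ⟨hu, hv, hlt⟩
  · rintro ⟨h1, h2, h3⟩; exact ⟨e.1, h1, e.2, ⟨h2, h3⟩, rfl⟩

private lemma pairsIn_subset {t D : ℕ} (S : Finset (Fin t × Fin D)) :
    pairsIn S ⊆ crossPairs t D := by
  intro e he
  rw [mem_pairsIn] at he
  rw [mem_crossPairs]
  exact he.2.2

private lemma part_card {t D : ℕ} (i : Fin t) :
    ((univ : Finset (Fin t × Fin D)).filter (fun w => w.1 = i)).card = D := by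
  have h : (univ : Finset (Fin t × Fin D)).filter (fun w => w.1 = i)
      = (univ : Finset (Fin D)).image (fun a => (i, a)) := by
    ext ⟨w1, w2⟩
    simp [Prod.ext_iff, eq_comm, and_comm]
  rw [h, Finset.card_image_of_injective _ (fun a b h => (Prod.ext_iff.1 h).2),
    Finset.card_univ, Fintype.card_fin]

private lemma copart_card {t D : ℕ} (v : Fin t × Fin D) :
    ((univ : Finset (Fin t × Fin D)).filter (fun w => ¬ w.1 = v.1)).card = t * D - D := by
  have h2 : ((univ : Finset (Fin t × Fin D)).filter (fun w => w.1 = v.1)).card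
      + ((univ : Finset (Fin t × Fin D)).filter (fun w => ¬ w.1 = v.1)).card
      = t * D := by
    rw [Finset.card_filter_add_card_filter_not, Finset.card_univ, Fintype.card_prod,
      Fintype.card_fin, Fintype.card_fin]
  rw [part_card v.1] at h2
  omega

private lemma incPairs_card {t D : ℕ} (v : Fin t × Fin D) :
    (incPairs v).card ≤ D * (t - 1) := by
  classical
  have hmaps : ∀ e ∈ incPairs v, (if e.1 = v then e.2 else e.1) ∈
      (univ : Finset (Fin t × Fin D)).filter (fun w => ¬ w.1 = v.1) := by
    intro e he
    rw [mem_incPairs, mem_crossPairs] at he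
    obtain ⟨hlt, hor⟩ := he
    by_cases h1 : e.1 = v
    · simp only [if_pos h1, Finset.mem_filter, Finset.mem_univ, true_and]
      rw [← h1]; exact ne_of_gt hlt
    · simp only [if_neg h1, Finset.mem_filter, Finset.mem_univ, true_and]
      rcases hor with h | h
      · exact absurd h h1
      · rw [← h]; exact ne_of_lt hlt
  have hinj : Set.InjOn
      (fun e : (Fin t × Fin D) × (Fin t × Fin D) => if e.1 = v then e.2 else e.1)
      (↑(incPairs v) : Set ((Fin t × Fin D) × (Fin t × Fin D))) := by
    intro e he e' he' heq
    rw [Finset.mem_coe, mem_incPairs, mem_crossPairs] at he he'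
    obtain ⟨hlt, hor⟩ := he
    obtain ⟨hlt', hor'⟩ := he'
    simp only at heq
    by_cases h1 : e.1 = v <;> by_cases h2 : e'.1 = v
    · rw [if_pos h1, if_pos h2] at heq
      exact Prod.ext (h1.trans h2.symm) heq
    · rw [if_pos h1, if_neg h2] at heq
      rcases hor' with h | h
      · exact absurd h h2
      · exfalso
        rw [h1] at hlt; rw [h] at hlt'; rw [heq] at hlt
        exact absurd (hlt.trans hlt') (lt_irrefl _)
    · rw [if_neg h1, if_pos h2] at heq
      rcases hor with h | h
      · exact absurd h h1
      · exfalso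
        rw [h2] at hlt'; rw [h] at hlt; rw [← heq] at hlt'
        exact absurd (hlt'.trans hlt) (lt_irrefl _)
    · rw [if_neg h1, if_neg h2] at heq
      rcases hor with h | h
      · exact absurd h h1
      · rcases hor' with h' | h'
        · exact absurd h' h2
        · exact Prod.ext heq (h.trans h'.symm)
  have h1 : (incPairs v).card
      ≤ ((univ : Finset (Fin t × Fin D)).filter (fun w => ¬ w.1 = v.1)).card :=
    Finset.card_le_card_of_injOn _ hmaps hinj
  rw [copart_card v] at h1
  have ht1 : 1 ≤ t := v.1.pos
  have h3 : D * (t - 1) + D = D * t := by rw [← Nat.mul_succ]; congr 1; omega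
  have h4 : t * D = D * t := Nat.mul_comm t D
  omega

private lemma pairsIn_card {t D k : ℕ} (S : Finset (Fin t × Fin D))
    (hS : ∀ i : Fin t, (S.filter (fun v => v.1 = i)).card = k) :
    k ^ 2 * ∑ i ∈ range t, i ≤ (pairsIn S).card := by
  classical
  have hdisj : ∀ u ∈ S, ∀ u' ∈ S, u ≠ u' →
      Disjoint ((S.filter (fun v => u.1 < v.1)).image (fun v => (u, v)))
        ((S.filter (fun v => u'.1 < v.1)).image (fun v => (u', v))) := by
    intro u _ u' _ hne
    rw [Finset.disjoint_left]
    rintro e he he'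
    simp only [Finset.mem_image] at he he'
    obtain ⟨a, _, rfl⟩ := he
    obtain ⟨b, _, hb⟩ := he'
    exact hne ((Prod.ext_iff.1 hb.symm).1)
  rw [pairsIn, Finset.card_biUnion hdisj]
  have himg : ∀ u : Fin t × Fin D,
      ((S.filter (fun v => u.1 < v.1)).image (fun v => (u, v))).card
      = (S.filter (fun v => u.1 < v.1)).card := by
    intro u
    exact Finset.card_image_of_injective _ (fun a b h => (Prod.ext_iff.1 h).2)
  have hinner : ∀ u : Fin t × Fin D, (S.filter (fun v => u.1 < v.1)).card
      = (Finset.Ioi u.1).card * k := by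
    intro u
    have hsplit : S.filter (fun v => u.1 < v.1)
        = (Finset.Ioi u.1).biUnion (fun j => S.filter (fun v => v.1 = j)) := by
      ext v
      simp only [Finset.mem_filter, Finset.mem_biUnion, Finset.mem_Ioi]
      constructor
      · rintro ⟨hv, hlt⟩; exact ⟨v.1, hlt, hv, rfl⟩
      · rintro ⟨j, hj, hv, rfl⟩; exact ⟨hv, hj⟩
    rw [hsplit, Finset.card_biUnion]
    · rw [Finset.sum_congr rfl (fun j _ => hS j), Finset.sum_const, smul_eq_mul]
    · intro x _ y _ hxy
      rw [Function.onFun, Finset.disjoint_left]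
      intro a ha ha'
      simp only [Finset.mem_filter] at ha ha'
      exact hxy (ha.2 ▸ ha'.2)
  calc k ^ 2 * ∑ i ∈ range t, i
      = ∑ i ∈ range t, k * (i * k) := by
        rw [Finset.mul_sum]; exact Finset.sum_congr rfl fun i _ => by ring
    _ = ∑ j ∈ range t, k * ((t - 1 - j) * k) :=
        (Finset.sum_range_reflect (fun j => k * (j * k)) t).symm
    _ = ∑ j : Fin t, k * ((t - 1 - (j:ℕ)) * k) :=
        (Fin.sum_univ_eq_sum_range (fun j => k * ((t - 1 - j) * k)) t).symm
    _ = ∑ j : Fin t, k * ((Finset.Ioi j).card * k) :=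
        Finset.sum_congr rfl (fun j _ => by rw [Fin.card_Ioi])
    _ = ∑ u ∈ S, (Finset.Ioi u.1).card * k := by
        rw [← Finset.sum_fiberwise S (fun u => u.1) (fun u => (Finset.Ioi u.1).card * k)]
        refine Finset.sum_congr rfl (fun j _ => ?_)
        rw [Finset.sum_congr rfl (fun u hu => by
          rw [(Finset.mem_filter.1 hu).2]), Finset.sum_const, hS j, smul_eq_mul]
    _ ≤ ∑ u ∈ S, ((S.filter (fun v => u.1 < v.1)).image (fun v => (u, v))).card := by
        refine Finset.sum_le_sum (fun u _ => ?_)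
        rw [himg u, hinner u]

private lemma transversal_count {t D k : ℕ} :
    (((univ : Finset (Finset (Fin t × Fin D))).filter
      (fun S => ∀ i : Fin t, (S.filter (fun v => v.1 = i)).card = k)).card) ≤ D ^ (k * t) := by
  classical
  set 𝒮 := (univ : Finset (Finset (Fin t × Fin D))).filter
      (fun S => ∀ i : Fin t, (S.filter (fun v => v.1 = i)).card = k) with h𝒮
  set T := Fintype.piFinset (fun _ : Fin t =>
      (univ : Finset (Finset (Fin D))).filter (fun A => A.card = k)) with hT
  have hmaps : ∀ S ∈ 𝒮, (fun i => (S.filter (fun v => v.1 = i)).image Prod.snd) ∈ T := by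
    intro S hS
    rw [Fintype.mem_piFinset]
    intro i
    simp only [Finset.mem_filter, Finset.mem_univ, true_and]
    rw [Finset.card_image_of_injOn]
    · exact (Finset.mem_filter.1 hS).2 i
    · intro a ha b hb hab
      simp only [Finset.coe_filter, Set.mem_setOf_eq] at ha hb
      exact Prod.ext (ha.2.trans hb.2.symm) hab
  have hrec : ∀ S : Finset (Fin t × Fin D), ∀ v : Fin t × Fin D,
      v ∈ S ↔ v.2 ∈ (S.filter (fun w => w.1 = v.1)).image Prod.snd := by
    intro S v
    simp only [Finset.mem_image, Finset.mem_filter]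
    constructor
    · intro hv; exact ⟨v, ⟨hv, rfl⟩, rfl⟩
    · rintro ⟨u, ⟨hu, h1⟩, h2⟩
      rwa [show v = u from (Prod.ext h1 h2).symm]
  have hinj : Set.InjOn (fun S : Finset (Fin t × Fin D) =>
      (fun i => (S.filter (fun v => v.1 = i)).image Prod.snd)) ↑𝒮 := by
    intro S _ S' _ heq
    ext v
    rw [hrec S v, hrec S' v, show (S.filter (fun w => w.1 = v.1)).image Prod.snd
      = (S'.filter (fun w => w.1 = v.1)).image Prod.snd from congrFun heq v.1]
  have h1 : 𝒮.card ≤ T.card := Finset.card_le_card_of_injOn _ hmaps hinj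
  have h2 : T.card = (D.choose k) ^ t := by
    rw [hT, Fintype.card_piFinset]
    rw [Finset.prod_const, Finset.card_univ, Fintype.card_fin]
    congr 1
    rw [← Fintype.card_subtype, Fintype.card_finset_len, Fintype.card_fin]
  calc 𝒮.card ≤ (D.choose k) ^ t := h2 ▸ h1
    _ ≤ (D ^ k) ^ t := Nat.pow_le_pow_left (Nat.choose_le_pow D k) t
    _ = D ^ (k * t) := by rw [← pow_mul]

set_option maxHeartbeats 2000000 in
private lemma main_prob (k t Δ D : ℕ) (hk : 2 ≤ k) (ht : 2 ≤ t) (hD4 : 4 ≤ D)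
    (hΔlt : Δ < D * (t - 1))
    (hΔ : (64 : ℝ) + 12 * Real.log ((k : ℝ) * t) ≤ Δ)
    (hD : (D : ℝ) < (k : ℝ) * Δ / (16 * Real.log D)) :
    ∃ H : SimpleGraph (Fin t × Fin D),
      (∀ (i : Fin t) (a b : Fin D), ¬ H.Adj (i, a) (i, b)) ∧
      (∀ v, (H.neighborSet v).ncard ≤ Δ) ∧
      ¬ ∃ S : Finset (Fin t × Fin D),
          (∀ a ∈ S, ∀ b ∈ S, ¬ H.Adj a b) ∧
          ∀ i : Fin t, (S.filter fun p => p.1 = i).card = k := by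
  classical
  have htR : (2:ℝ) ≤ t := by exact_mod_cast ht
  have hDR : (4:ℝ) ≤ D := by exact_mod_cast hD4
  have hkR : (2:ℝ) ≤ k := by exact_mod_cast hk
  have hkt1 : (1:ℝ) ≤ (k:ℝ) * t := by nlinarith
  have hΔ64 : (64:ℝ) ≤ (Δ:ℝ) := by
    have := Real.log_nonneg hkt1; linarith
  have hΔpos : (0:ℝ) < Δ := by linarith
  have hlogD : (1:ℝ) < Real.log D := by
    have h4 : Real.log 4 ≤ Real.log D := by
      gcongr <;> norm_num
    have h42 : Real.log 4 = 2 * Real.log 2 := by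
      rw [show (4:ℝ) = 2^2 by norm_num, Real.log_pow]; push_cast; ring
    nlinarith [Real.log_two_gt_d9]
  have h16 : (D:ℝ) * (16 * Real.log D) < k * Δ := by
    rw [lt_div_iff₀ (by positivity)] at hD; exact hD
  have hDkΔ : (D:ℝ) < (k:ℝ) * Δ := by nlinarith
  have hlogΔ : Real.log Δ ≤ (Δ:ℝ)/12 := aux_log12 hΔ64
  have hlogtD : Real.log ((t:ℝ) * D) ≤ (Δ:ℝ)/6 - 16/3 := by
    rw [Real.log_mul (by positivity) (by positivity)]
    have h1 : Real.log D ≤ Real.log ((k:ℝ)*Δ) := by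
      gcongr <;> first
        | positivity
        | exact le_of_lt hDkΔ
    rw [Real.log_mul (by positivity) (by positivity)] at h1
    have h2 : Real.log ((k:ℝ)*t) = Real.log k + Real.log t :=
      Real.log_mul (by positivity) (by positivity)
    rw [h2] at hΔ
    linarith
  set p : ℝ := (Δ:ℝ) / (2*D*t) with hp
  have hppos : 0 < p := by positivity
  have hp0 : 0 ≤ p := le_of_lt hppos
  have hΔDt : (Δ:ℝ) < D * ((t:ℝ) - 1) := by
    calc (Δ:ℝ) < ((D*(t-1):ℕ):ℝ) := by exact_mod_cast hΔlt
      _ = D*((t:ℝ)-1) := by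
          push_cast [Nat.cast_sub (show 1 ≤ t by omega)]
          ring
  have hp1 : p ≤ 1 := by
    rw [hp, div_le_one (by positivity)]
    nlinarith
  set q : ℝ := 1 - p with hq
  have hq0 : 0 ≤ q := by rw [hq]; linarith
  have hq1 : q ≤ 1 := by rw [hq]; linarith
  have hpq : p + q = 1 := by rw [hq]; ring
  set C := crossPairs t D with hCdef
  have htotal : ∑ E ∈ C.powerset, p ^ E.card * q ^ (C.card - E.card) = 1 := by
    rw [aux_sum_pow, hpq, one_pow]
  -- degree bound
  have hdeg : ∀ v : Fin t × Fin D,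
      ∑ E ∈ C.powerset.filter (fun E => Δ + 1 ≤ (E ∩ incPairs v).card),
          p ^ E.card * q ^ (C.card - E.card)
        ≤ Real.exp ((Δ:ℝ)/2) / 2 ^ (Δ+1) := by
    intro v
    have hmono : (1+p) ^ (D*(t-1)) ≤ Real.exp ((Δ:ℝ)/2) := by
      have h1 : (1+p) ^ (D*(t-1)) ≤ Real.exp p ^ (D*(t-1)) :=
        pow_le_pow_left₀ (by linarith) (by linarith [Real.add_one_le_exp p]) _
      have h2 : Real.exp p ^ (D*(t-1)) = Real.exp (((D*(t-1):ℕ):ℝ) * p) :=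
        (Real.exp_nat_mul _ _).symm
      have hcast : ((D*(t-1):ℕ):ℝ) ≤ (D:ℝ) * t := by
        calc ((D*(t-1):ℕ):ℝ) ≤ ((D*t:ℕ):ℝ) := by
              exact_mod_cast Nat.mul_le_mul_left D (Nat.sub_le t 1)
          _ = (D:ℝ)*t := by push_cast; ring
      have h3 : ((D*(t-1):ℕ):ℝ) * p ≤ (Δ:ℝ)/2 := by
        rw [hp, mul_div_assoc', div_le_div_iff₀ (by positivity) (by norm_num)]
        nlinarith
      rw [h2] at h1
      exact le_trans h1 (Real.exp_le_exp.2 h3)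
    calc ∑ E ∈ C.powerset.filter (fun E => Δ + 1 ≤ (E ∩ incPairs v).card),
          p ^ E.card * q ^ (C.card - E.card)
        ≤ (1+p) ^ (incPairs v).card / 2 ^ (Δ+1) :=
          aux_deg C (incPairs v) (incPairs_subset v) p q hp0 hq0 hpq Δ
      _ ≤ (1+p) ^ (D*(t-1)) / 2 ^ (Δ+1) := by
          gcongr
          · linarith
          · exact incPairs_card v
      _ ≤ Real.exp ((Δ:ℝ)/2) / 2 ^ (Δ+1) := by gcongr
  -- independence bound
  set m0 := k^2 * ∑ i ∈ range t, i with hm0def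
  have hind : ∀ S : Finset (Fin t × Fin D),
      (∀ i : Fin t, (S.filter (fun v => v.1 = i)).card = k) →
      ∑ E ∈ C.powerset.filter (fun E => E ∩ pairsIn S = ∅),
          p ^ E.card * q ^ (C.card - E.card) ≤ q ^ m0 := by
    intro S hS
    have hset : C.powerset.filter (fun E => E ∩ pairsIn S = ∅) = (C \ pairsIn S).powerset := by
      ext E
      simp only [Finset.mem_filter, Finset.mem_powerset, Finset.subset_sdiff,
        ← Finset.disjoint_iff_inter_eq_empty]
      try tauto
    rw [hset, aux_ind C (pairsIn S) (pairsIn_subset S) p q hpq]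
    exact pow_le_pow_of_le_one hq0 hq1 (pairsIn_card S hS)
  set 𝒮 := (univ : Finset (Finset (Fin t × Fin D))).filter
      (fun S => ∀ i : Fin t, (S.filter (fun v => v.1 = i)).card = k) with h𝒮
  set Bad := C.powerset.filter (fun E =>
      (∃ v : Fin t × Fin D, Δ + 1 ≤ (E ∩ incPairs v).card)
      ∨ (∃ S ∈ 𝒮, E ∩ pairsIn S = ∅)) with hBad
  have hbadsum : ∑ E ∈ Bad, p ^ E.card * q ^ (C.card - E.card) ≤
      ((t:ℝ)*D) * (Real.exp ((Δ:ℝ)/2) / 2^(Δ+1)) + (𝒮.card : ℝ) * q ^ m0 := by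
    have hwt0 : ∀ E : Finset ((Fin t × Fin D) × (Fin t × Fin D)),
        (0:ℝ) ≤ p ^ E.card * q ^ (C.card - E.card) :=
      fun E => mul_nonneg (pow_nonneg hp0 _) (pow_nonneg hq0 _)
    have hsub : Bad ⊆ ((univ : Finset (Fin t × Fin D)).biUnion
        (fun v => C.powerset.filter (fun E => Δ + 1 ≤ (E ∩ incPairs v).card))) ∪
        (𝒮.biUnion (fun S => C.powerset.filter (fun E => E ∩ pairsIn S = ∅))) := by
      intro E hE
      rw [hBad, Finset.mem_filter] at hE
      obtain ⟨hEC, hcond⟩ := hE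
      rw [Finset.mem_union]
      rcases hcond with ⟨v, hv⟩ | ⟨S, hS1, hS2⟩
      · exact Or.inl (Finset.mem_biUnion.2 ⟨v, Finset.mem_univ v,
          Finset.mem_filter.2 ⟨hEC, hv⟩⟩)
      · exact Or.inr (Finset.mem_biUnion.2 ⟨S, hS1, Finset.mem_filter.2 ⟨hEC, hS2⟩⟩)
    calc ∑ E ∈ Bad, p ^ E.card * q ^ (C.card - E.card)
        ≤ ∑ E ∈ ((univ : Finset (Fin t × Fin D)).biUnion
            (fun v => C.powerset.filter (fun E => Δ + 1 ≤ (E ∩ incPairs v).card))) ∪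
            (𝒮.biUnion (fun S => C.powerset.filter (fun E => E ∩ pairsIn S = ∅))),
            p ^ E.card * q ^ (C.card - E.card) :=
          Finset.sum_le_sum_of_subset_of_nonneg hsub (fun E _ _ => hwt0 E)
      _ ≤ (∑ E ∈ (univ : Finset (Fin t × Fin D)).biUnion
            (fun v => C.powerset.filter (fun E => Δ + 1 ≤ (E ∩ incPairs v).card)),
            p ^ E.card * q ^ (C.card - E.card))
          + ∑ E ∈ 𝒮.biUnion (fun S => C.powerset.filter (fun E => E ∩ pairsIn S = ∅)),
            p ^ E.card * q ^ (C.card - E.card) :=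
          aux_union_le _ _ _ hwt0
      _ ≤ (∑ v : Fin t × Fin D,
            ∑ E ∈ C.powerset.filter (fun E => Δ + 1 ≤ (E ∩ incPairs v).card),
              p ^ E.card * q ^ (C.card - E.card))
          + ∑ S ∈ 𝒮, ∑ E ∈ C.powerset.filter (fun E => E ∩ pairsIn S = ∅),
              p ^ E.card * q ^ (C.card - E.card) :=
          add_le_add (aux_biUnion_le _ _ _ hwt0) (aux_biUnion_le _ _ _ hwt0)
      _ ≤ (∑ _v : Fin t × Fin D, Real.exp ((Δ:ℝ)/2) / 2^(Δ+1))
          + ∑ S ∈ 𝒮, q ^ m0 :=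
          add_le_add (Finset.sum_le_sum (fun v _ => hdeg v))
            (Finset.sum_le_sum (fun S hS => hind S (by
              rw [h𝒮, Finset.mem_filter] at hS; exact hS.2)))
      _ = ((t:ℝ)*D) * (Real.exp ((Δ:ℝ)/2) / 2^(Δ+1)) + (𝒮.card : ℝ) * q ^ m0 := by
          rw [Finset.sum_const, Finset.sum_const, Finset.card_univ, Fintype.card_prod,
            Fintype.card_fin, Fintype.card_fin, nsmul_eq_mul, nsmul_eq_mul]
          push_cast
          ring
  -- numeric bound 1
  have h2pow : ((2:ℝ)) ^ (Δ+1) = 2 * Real.exp ((Δ:ℝ) * Real.log 2) := by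
    calc (2:ℝ)^(Δ+1) = 2^Δ * 2 := pow_succ 2 Δ
      _ = Real.exp ((Δ:ℝ)*Real.log 2) * 2 := by
          rw [Real.exp_nat_mul, Real.exp_log (by norm_num : (0:ℝ) < 2)]
      _ = 2 * Real.exp ((Δ:ℝ)*Real.log 2) := mul_comm _ _
  have hT1 : ((t:ℝ)*D) * (Real.exp ((Δ:ℝ)/2) / 2^(Δ+1)) ≤ 1/2 := by
    have htD : ((t:ℝ)*D) ≤ Real.exp ((Δ:ℝ)/6) := by
      rw [← Real.exp_log (show (0:ℝ) < (t:ℝ)*D by positivity)]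
      exact Real.exp_le_exp.2 (by linarith)
    calc ((t:ℝ)*D) * (Real.exp ((Δ:ℝ)/2) / 2^(Δ+1))
        ≤ Real.exp ((Δ:ℝ)/6) * (Real.exp ((Δ:ℝ)/2) / 2^(Δ+1)) :=
          mul_le_mul_of_nonneg_right htD (by positivity)
      _ = Real.exp ((Δ:ℝ)/6 + (Δ:ℝ)/2 - (Δ:ℝ)*Real.log 2) / 2 := by
          rw [h2pow, Real.exp_sub, Real.exp_add]
          field_simp
          try ring
      _ ≤ 1/2 := by
          have hle : Real.exp ((Δ:ℝ)/6 + (Δ:ℝ)/2 - (Δ:ℝ)*Real.log 2) ≤ 1 := by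
            rw [Real.exp_le_one_iff]
            nlinarith [Real.log_two_gt_d9]
          linarith
  -- numeric bound 2
  have hm0cast : (m0:ℝ) * 2 = (k:ℝ)^2 * ((t:ℝ) * ((t:ℝ)-1)) := by
    have hgauss := Finset.sum_range_id_mul_two t
    have hnat : m0 * 2 = k^2 * (t*(t-1)) := by
      rw [hm0def, mul_assoc, hgauss]
    calc (m0:ℝ)*2 = ((m0*2 : ℕ):ℝ) := by push_cast; ring
      _ = ((k^2*(t*(t-1)) : ℕ):ℝ) := by rw [hnat]
      _ = (k:ℝ)^2*((t:ℝ)*((t:ℝ)-1)) := by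
          push_cast [Nat.cast_sub (show 1 ≤ t by omega)]
          ring
  have hq_exp : q ^ m0 ≤ Real.exp (-(p * m0)) := by
    have h1 : q ≤ Real.exp (-p) := by
      have := Real.add_one_le_exp (-p); rw [hq]; linarith
    calc q ^ m0 ≤ Real.exp (-p) ^ m0 := pow_le_pow_left₀ hq0 h1 m0
      _ = Real.exp ((m0:ℝ) * (-p)) := (Real.exp_nat_mul _ _).symm
      _ = Real.exp (-(p * m0)) := by ring_nf
  have key16 : 16 * (D:ℝ) * Real.log D ≤ (k:ℝ)*Δ := by nlinarith
  have hpm0 : 2 * ((k*t : ℕ):ℝ) * Real.log D ≤ p * (m0:ℝ) := by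
    rw [hp, div_mul_eq_mul_div, le_div_iff₀ (by positivity)]
    have h7 : (k:ℝ)^2*(t:ℝ)^2/4 ≤ (m0:ℝ) := by nlinarith
    calc 2*((k*t:ℕ):ℝ)*Real.log D * (2*(D:ℝ)*t)
        = (16*(D:ℝ)*Real.log D) * ((k:ℝ)*(t:ℝ)^2/4) := by push_cast; ring
      _ ≤ ((k:ℝ)*Δ) * ((k:ℝ)*(t:ℝ)^2/4) :=
          mul_le_mul_of_nonneg_right key16 (by positivity)
      _ = (Δ:ℝ) * ((k:ℝ)^2*(t:ℝ)^2/4) := by ring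
      _ ≤ (Δ:ℝ) * m0 := mul_le_mul_of_nonneg_left h7 hΔpos.le
  have hexp2 : Real.exp (-(2*((k*t:ℕ):ℝ)*Real.log D)) = 1 / (D:ℝ)^(2*(k*t)) := by
    rw [Real.exp_neg, show (2*((k*t:ℕ):ℝ)) = ((2*(k*t) : ℕ):ℝ) by push_cast; ring,
      Real.exp_nat_mul, Real.exp_log (by positivity), one_div]
  have hq_final : q ^ m0 ≤ 1/(D:ℝ)^(2*(k*t)) := by
    refine le_trans hq_exp ?_
    rw [← hexp2]
    exact Real.exp_le_exp.2 (by linarith)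
  have hScardR : ((𝒮.card : ℕ):ℝ) ≤ (D:ℝ)^(k*t) := by
    have hs := transversal_count (t := t) (D := D) (k := k)
    calc ((𝒮.card:ℕ):ℝ) ≤ ((D^(k*t) : ℕ):ℝ) := by
          rw [h𝒮]; exact_mod_cast hs
      _ = (D:ℝ)^(k*t) := by push_cast; ring
  have hT2 : (𝒮.card:ℝ) * q^m0 ≤ 1/4 := by
    calc (𝒮.card:ℝ) * q^m0 ≤ (D:ℝ)^(k*t) * (1/(D:ℝ)^(2*(k*t))) :=
          mul_le_mul hScardR hq_final (pow_nonneg hq0 _) (by positivity)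
      _ = 1/(D:ℝ)^(k*t) := by
          rw [show 2*(k*t) = k*t + k*t by ring, pow_add, one_div, one_div, mul_inv,
            ← mul_assoc, mul_inv_cancel₀ (by positivity), one_mul]
      _ ≤ 1/4 := by
          rw [div_le_div_iff₀ (by positivity) (by norm_num)]
          have hkt4 : k*t ≠ 0 := by positivity
          have h1 : (4:ℝ) ≤ (4:ℝ)^(k*t) := le_self_pow₀ (by norm_num) hkt4
          have h2 : (4:ℝ)^(k*t) ≤ (D:ℝ)^(k*t) := pow_le_pow_left₀ (by norm_num) hDR _
          linarith
  -- find a good E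
  have hgood : ∃ E ∈ C.powerset, E ∉ Bad := by
    by_contra hcon
    push_neg at hcon
    have h1 : ∑ E ∈ C.powerset, p ^ E.card * q ^ (C.card - E.card)
        ≤ ∑ E ∈ Bad, p ^ E.card * q ^ (C.card - E.card) :=
      Finset.sum_le_sum_of_subset_of_nonneg (fun E hE => hcon E hE)
        (fun E _ _ => mul_nonneg (pow_nonneg hp0 _) (pow_nonneg hq0 _))
    rw [htotal] at h1
    linarith
  obtain ⟨E, hEC, hEgood⟩ := hgood
  have hnotbad : ¬((∃ v : Fin t × Fin D, Δ + 1 ≤ (E ∩ incPairs v).card)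
      ∨ (∃ S ∈ 𝒮, E ∩ pairsIn S = ∅)) := by
    intro h; exact hEgood (by rw [hBad]; exact Finset.mem_filter.2 ⟨hEC, h⟩)
  push_neg at hnotbad
  obtain ⟨hdegE, hindE⟩ := hnotbad
  refine ⟨⟨fun u w => ((u, w) ∈ E ∩ C ∨ (w, u) ∈ E ∩ C), ?_, ?_⟩, ?_, ?_, ?_⟩
  · constructor; intro u w h
    exact Or.symm h
  · constructor; intro u h
    rcases h with h | h <;>
    · have h2 := (Finset.mem_inter.1 h).2
      rw [hCdef, mem_crossPairs] at h2
      exact lt_irrefl _ h2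
  · intro i a b hadj
    rcases hadj with h | h <;>
    · have h2 := (Finset.mem_inter.1 h).2
      rw [hCdef, mem_crossPairs] at h2
      simp at h2
  · intro v
    have hv := hdegE v
    have hsub : {w | ((v, w) ∈ E ∩ C ∨ (w, v) ∈ E ∩ C)} ⊆
        ↑((E ∩ incPairs v).image
          (fun e : (Fin t × Fin D) × (Fin t × Fin D) => if e.1 = v then e.2 else e.1)) := by
      intro w hw
      rw [Finset.coe_image]
      rcases hw with h | h
      · refine ⟨(v, w), ?_, by
        show (if (v, w).1 = v then (v, w).2 else (v, w).1) = w
        rw [if_pos rfl]⟩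
        rw [Finset.mem_coe, Finset.mem_inter]
        refine ⟨(Finset.mem_inter.1 h).1, ?_⟩
        rw [mem_incPairs]
        exact ⟨by rw [← hCdef]; exact (Finset.mem_inter.1 h).2, Or.inl rfl⟩
      · have h2 := (Finset.mem_inter.1 h).2
        rw [hCdef, mem_crossPairs] at h2
        have hwv : ¬ ((w, v).1 = v) := by
          intro hh
          rw [hh] at h2
          exact lt_irrefl _ h2
        refine ⟨(w, v), ?_, by
          show (if (w, v).1 = v then (w, v).2 else (w, v).1) = w
          rw [if_neg hwv]⟩
        rw [Finset.mem_coe, Finset.mem_inter]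
        refine ⟨(Finset.mem_inter.1 h).1, ?_⟩
        rw [mem_incPairs]
        exact ⟨by rw [← hCdef]; exact (Finset.mem_inter.1 h).2, Or.inr rfl⟩
    calc (SimpleGraph.neighborSet _ v).ncard
        ≤ ((E ∩ incPairs v).image
            (fun e : (Fin t × Fin D) × (Fin t × Fin D) => if e.1 = v then e.2 else e.1)).card := by
          rw [← Set.ncard_coe_finset]
          exact Set.ncard_le_ncard hsub (Finset.finite_toSet _)
      _ ≤ (E ∩ incPairs v).card := Finset.card_image_le
      _ ≤ Δ := by omega
  · rintro ⟨S, hSind, hScount⟩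
    have hS𝒮 : S ∈ 𝒮 := by
      rw [h𝒮]; exact Finset.mem_filter.2 ⟨Finset.mem_univ _, hScount⟩
    apply Finset.nonempty_iff_ne_empty.1 (hindE S hS𝒮)
    rw [Finset.eq_empty_iff_forall_notMem]
    intro e he
    rw [Finset.mem_inter, mem_pairsIn] at he
    obtain ⟨heE, h1, h2, h3⟩ := he
    have hadj : (e.1, e.2) ∈ E ∩ C ∨ (e.2, e.1) ∈ E ∩ C := Or.inl (by
      rw [Finset.mem_inter]
      exact ⟨by rwa [Prod.mk.eta], by rw [hCdef, mem_crossPairs]; exact h3⟩)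
    exact hSind e.1 h1 e.2 h2 hadj

/-- There exists a graph on `t` parts of size `D`, each part independent, with
maximum degree at most `Δ`, containing no `k`-independent transversal, provided
`Δ ≥ 64 + 12·ln(kt)` and `D < kΔ/(16·ln D)`. -/
theorem stmt14 (k t Δ D : ℕ) (hk : 2 ≤ k) (ht : 2 ≤ t) (hD4 : 4 ≤ D)
    (hΔ : (64 : ℝ) + 12 * Real.log ((k : ℝ) * t) ≤ Δ)
    (hD : (D : ℝ) < (k : ℝ) * Δ / (16 * Real.log D)) :
    ∃ H : SimpleGraph (Fin t × Fin D),
      (∀ (i : Fin t) (a b : Fin D), ¬ H.Adj (i, a) (i, b)) ∧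
      (∀ v, (H.neighborSet v).ncard ≤ Δ) ∧
      ¬ ∃ S : Finset (Fin t × Fin D),
          (∀ a ∈ S, ∀ b ∈ S, ¬ H.Adj a b) ∧
          ∀ i : Fin t, (S.filter fun p => p.1 = i).card = k := by
  classical
  by_cases hkD : k ≤ D
  · by_cases hcase : Δ < D * (t - 1)
    · exact main_prob k t Δ D hk ht hD4 hcase hΔ hD
    · -- complete multipartite graph works
      push_neg at hcase
      refine ⟨⟨fun u w => u.1 ≠ w.1, ⟨fun u w h => h.symm⟩, ⟨fun u h => h rfl⟩⟩, ?_, ?_, ?_⟩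
      · intro i a b hadj
        exact hadj rfl
      · intro v
        have hsub : {w : Fin t × Fin D | v.1 ≠ w.1} ⊆
            ↑((univ : Finset (Fin t × Fin D)).filter (fun w => ¬ w.1 = v.1)) := by
          intro w hw
          rw [Finset.mem_coe, Finset.mem_filter]
          exact ⟨Finset.mem_univ _, fun hh => hw hh.symm⟩
        calc (SimpleGraph.neighborSet _ v).ncard
            ≤ ((univ : Finset (Fin t × Fin D)).filter (fun w => ¬ w.1 = v.1)).card := by
              rw [← Set.ncard_coe_finset]
              exact Set.ncard_le_ncard hsub (Finset.finite_toSet _)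
          _ = t * D - D := copart_card v
          _ ≤ Δ := by
              have h3 : D * (t - 1) + D = D * t := by
                rw [← Nat.mul_succ]; congr 1; omega
              have h4 : t * D = D * t := Nat.mul_comm t D
              omega
      · rintro ⟨S, hSind, hScount⟩
        have h0t : 0 < t := by omega
        have h1t : 1 < t := by omega
        set i0 : Fin t := ⟨0, h0t⟩ with hi0
        set i1 : Fin t := ⟨1, h1t⟩ with hi1
        have hc0 : (S.filter fun p => p.1 = i0).card = k := hScount i0
        have hc1 : (S.filter fun p => p.1 = i1).card = k := hScount i1
        have hne0 : (S.filter fun p => p.1 = i0).Nonempty := by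
          rw [← Finset.card_pos, hc0]; omega
        have hne1 : (S.filter fun p => p.1 = i1).Nonempty := by
          rw [← Finset.card_pos, hc1]; omega
        obtain ⟨a, ha⟩ := hne0
        obtain ⟨b, hb⟩ := hne1
        rw [Finset.mem_filter] at ha hb
        refine hSind a ha.1 b hb.1 ?_
        show a.1 ≠ b.1
        rw [ha.2, hb.2, hi0, hi1]
        intro hcon
        have := congrArg Fin.val hcon
        simp at this
  · -- k > D : the empty graph works
    push_neg at hkD
    refine ⟨⊥, ?_, ?_, ?_⟩
    · intro i a b hadj
      exact hadj
    · intro v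
      have hbot : (⊥ : SimpleGraph (Fin t × Fin D)).neighborSet v = ∅ := by
        ext w; simp
      rw [hbot, Set.ncard_empty]
      exact Nat.zero_le _
    · rintro ⟨S, _, hScount⟩
      have h0t : 0 < t := by omega
      set i0 : Fin t := ⟨0, h0t⟩ with hi0
      have hc0 : (S.filter fun p => p.1 = i0).card = k := hScount i0
      have hle : (S.filter fun p => p.1 = i0).card ≤ D := by
        calc (S.filter fun p => p.1 = i0).card
            ≤ ((univ : Finset (Fin t × Fin D)).filter (fun w => w.1 = i0)).card := by
              apply Finset.card_le_card
              intro x hx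
              rw [Finset.mem_filter] at hx ⊢
              exact ⟨Finset.mem_univ _, hx.2⟩
          _ = D := part_card i0
      omega
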